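/- If P(min(η(X), 1-η(X)) ≤ ε) > 0 for every ε > 0, then τ_γ → 1 as γ → 1⁻ and the limit ℛ* := lim_{γ→1⁻} ℛ(γ) equals 0. -/
import Mathlib


open MeasureTheory Set Filter

/-- If `P(min(η(X), 1-η(X)) ≤ ε) > 0` for every `ε > 0`, then the optimal threshold
satisfies `τ_γ → 1` as `γ → 1⁻` and `ℛ* = lim_{γ→1⁻} ℛ(γ) = 0`.  Here `P` is the law
of `X`, `τ γ ∈ [1/2,1]` is the quantile threshold of `max(η,1-η)` determining the
optimal indecision region (`P(Z > 1-τ_γ) ≤ γ ≤ P(Z ≥ 1-τ_γ)` with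
`Z = min(η,1-η)`), and the minimax risk `ℛ` is non-increasing with
`0 ≤ ℛ(γ) ≤ 1 - τ_γ`. -/
theorem risk_limit_zero {𝓧 : Type*} [MeasurableSpace 𝓧]
    (P : Measure 𝓧) [IsProbabilityMeasure P]
    (η : 𝓧 → ℝ) (hη : Measurable η)
    (Z : 𝓧 → ℝ) (hZ : ∀ x, Z x = min (η x) (1 - η x))
    (τ R : ℝ → ℝ)
    (hτmem : ∀ γ ∈ Ico (0 : ℝ) 1, τ γ ∈ Icc (1 / 2 : ℝ) 1)
    (hτquant : ∀ γ ∈ Ico (0 : ℝ) 1,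
      (P {x | 1 - τ γ < Z x}).toReal ≤ γ ∧ γ ≤ (P {x | 1 - τ γ ≤ Z x}).toReal)
    (hRnonneg : ∀ γ ∈ Ico (0 : ℝ) 1, 0 ≤ R γ)
    (hRle : ∀ γ ∈ Ico (0 : ℝ) 1, R γ ≤ 1 - τ γ)
    (hRanti : AntitoneOn R (Ico 0 1))
    (hmass : ∀ ε : ℝ, 0 < ε → 0 < (P {x | Z x ≤ ε}).toReal) :
    Tendsto τ (nhdsWithin 1 (Iio 1)) (nhds 1) ∧
    Tendsto R (nhdsWithin 1 (Iio 1)) (nhds 0) := by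
  have hZm : Measurable Z := by
    have hfun : Z = fun x => min (η x) (1 - η x) := funext hZ
    rw [hfun]
    exact hη.min (measurable_const.sub hη)
  have hmem : ∀ᶠ γ in nhdsWithin (1:ℝ) (Iio 1), γ ∈ Ico (0:ℝ) 1 := by
    have h1 : Ioo (0:ℝ) 1 ∈ nhdsWithin (1:ℝ) (Iio 1) :=
      Ioo_mem_nhdsLT_of_mem (by norm_num)
    exact Filter.mem_of_superset h1 fun γ hγ => ⟨le_of_lt hγ.1, hγ.2⟩
  have key : ∀ ε : ℝ, 0 < ε → ∀ᶠ γ in nhdsWithin (1:ℝ) (Iio 1), 1 - ε < τ γ := by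
    intro ε hε
    set c := (P {x | Z x ≤ ε / 2}).toReal with hc_def
    have hc : 0 < c := hmass _ (by linarith)
    have h2 : Ioo (max 0 (1 - c)) 1 ∈ nhdsWithin (1:ℝ) (Iio 1) :=
      Ioo_mem_nhdsLT_of_mem ⟨max_lt zero_lt_one (by linarith), le_refl 1⟩
    refine Filter.mem_of_superset h2 fun γ hγ => ?_
    simp only [Set.mem_Ioo, Set.mem_setOf_eq] at hγ ⊢
    have hγI : γ ∈ Ico (0:ℝ) 1 :=
      ⟨le_of_lt (lt_of_le_of_lt (le_max_left 0 _) hγ.1), hγ.2⟩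
    by_contra h
    push_neg at h
    have hεle : ε ≤ 1 - τ γ := by linarith
    have hsub : {x | 1 - τ γ ≤ Z x} ⊆ {x | ε ≤ Z x} :=
      fun x hx => le_trans hεle hx
    have h1 : γ ≤ (P {x | ε ≤ Z x}).toReal :=
      le_trans (hτquant γ hγI).2
        (ENNReal.toReal_mono (measure_ne_top P _) (measure_mono hsub))
    have hdisj : Disjoint {x | ε ≤ Z x} {x | Z x ≤ ε / 2} := by
      rw [Set.disjoint_left]
      intro x hx hx'
      simp only [Set.mem_setOf_eq] at hx hx'
      linarith
    have hmsA : MeasurableSet {x | ε ≤ Z x} := hZm measurableSet_Ici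
    have hmsB : MeasurableSet {x | Z x ≤ ε / 2} := hZm measurableSet_Iic
    have hsum : P {x | ε ≤ Z x} + P {x | Z x ≤ ε / 2} ≤ 1 := by
      rw [← measure_union hdisj hmsB]
      calc P ({x | ε ≤ Z x} ∪ {x | Z x ≤ ε / 2}) ≤ P Set.univ :=
            measure_mono (Set.subset_univ _)
        _ = 1 := measure_univ
    have hsumR : (P {x | ε ≤ Z x}).toReal + c ≤ 1 := by
      rw [hc_def, ← ENNReal.toReal_add (measure_ne_top P _) (measure_ne_top P _)]
      have := ENNReal.toReal_mono ENNReal.one_ne_top hsum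
      simpa using this
    have : 1 - c < γ := lt_of_le_of_lt (le_max_right 0 _) hγ.1
    linarith
  have hτtend : Tendsto τ (nhdsWithin 1 (Iio 1)) (nhds 1) := by
    rw [tendsto_order]
    constructor
    · intro a ha
      have := key (1 - a) (by linarith)
      exact this.mono fun γ hγ => by linarith
    · intro b hb
      exact hmem.mono fun γ hγ => lt_of_le_of_lt (hτmem γ hγ).2 hb
  refine ⟨hτtend, ?_⟩
  have hsub : Tendsto (fun γ => 1 - τ γ) (nhdsWithin 1 (Iio 1)) (nhds 0) := by
    have h := Tendsto.sub (tendsto_const_nhds : Tendsto (fun _ : ℝ => (1:ℝ)) (nhdsWithin 1 (Iio 1)) (nhds 1)) hτtend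
    simpa using h
  exact squeeze_zero' (hmem.mono fun γ hγ => hRnonneg γ hγ)
    (hmem.mono fun γ hγ => hRle γ hγ) hsub
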